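/- Every open ball in ℝⁿ is a c-uniform domain for c = π/2: for any two points z₁, z₂ in the ball B there is a rectifiable arc γ ⊂ B joining them with ℓ(γ) ≤ (π/2)|z₁ − z₂| and min{ℓ(γ[z₁,z]), ℓ(γ[z₂,z])} ≤ (π/2)·d_B(z) for every z ∈ γ. -/

import Mathlib

set_option maxHeartbeats 1000000

open Metric Set
open scoped RealInnerProductSpace

private lemma infDist_compl_ball_ge {F : Type*} [NormedAddCommGroup F] {x₀ x : F} {r : ℝ}
    (hne : ((ball x₀ r)ᶜ : Set F).Nonempty) :
    r - dist x x₀ ≤ infDist x (ball x₀ r)ᶜ := by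
  by_contra h
  push_neg at h
  obtain ⟨y, hy, hxy⟩ := (infDist_lt_iff hne).1 h
  apply hy
  rw [mem_ball]
  calc dist y x₀ ≤ dist y x + dist x x₀ := dist_triangle _ _ _
    _ < r := by rw [dist_comm y x]; linarith

private lemma evar_lip' {F : Type*} [NormedAddCommGroup F] {f : ℝ → F} {C a b : ℝ}
    (hC : 0 ≤ C) (hab : a ≤ b)
    (h : ∀ x ∈ Icc a b, ∀ y ∈ Icc a b, dist (f x) (f y) ≤ C * dist x y) :
    eVariationOn f (Icc a b) ≤ ENNReal.ofReal (C * (b - a)) := by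
  have hlip : LipschitzOnWith (Real.toNNReal C) f (Icc a b) := by
    apply LipschitzOnWith.of_dist_le_mul
    intro x hx y hy
    simpa [Real.coe_toNNReal C hC] using h x hx y hy
  have h2 := hlip.comp_eVariationOn_le (g := id) (s := Icc a b) (mapsTo_id _)
  have h3 : eVariationOn (id : ℝ → ℝ) (Icc a b) ≤ ENNReal.ofReal (b - a) := by
    have := (monotone_id.monotoneOn (Icc a b)).eVariationOn_le
      (left_mem_Icc.2 hab) (right_mem_Icc.2 hab)
    simpa using this
  calc eVariationOn f (Icc a b) = eVariationOn (f ∘ id) (Icc a b) := rfl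
    _ ≤ (Real.toNNReal C) * eVariationOn id (Icc a b) := h2
    _ ≤ (Real.toNNReal C) * ENNReal.ofReal (b - a) := mul_le_mul_right h3 _
    _ = ENNReal.ofReal C * ENNReal.ofReal (b - a) := rfl
    _ = ENNReal.ofReal (C * (b - a)) := (ENNReal.ofReal_mul hC).symm


open Metric Set
open scoped RealInnerProductSpace

private lemma le_of_sq_le_sq' {a b : ℝ} (ha : 0 ≤ a) (hb : 0 ≤ b) (h : a^2 ≤ b^2) : a ≤ b := by
  nlinarith

/-- scalar core of Case B -/
private lemma caseB_sq {k ρ lam d J r L : ℝ}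
    (hk2 : k^2 = Real.pi^2/4 - 1) (hk1 : 1 ≤ k) (hρ : 0 ≤ ρ)
    (hlam0 : 0 ≤ lam) (hlam1 : lam ≤ 1) (hlamd : lam * d = k * ρ)
    (hdr : d < r)
    (hA : ρ^2 + 2*J + d^2 < r^2)
    (hL0 : 0 ≤ L) (hL : L^2 = ρ^2 + 2*(lam*J) + (lam*d)^2) :
    L ≤ Real.pi/2 * (r - (d - k*ρ)) := by
  have hπ := Real.pi_gt_three
  have hk0 : (0:ℝ) ≤ k := le_trans zero_le_one hk1
  set s : ℝ := r - d with hs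
  have hs0 : 0 < s := by simp only [hs]; linarith
  have hkρ0 : 0 ≤ k * ρ := by positivity
  have hJ' : 2*J ≤ r^2 - ρ^2 - d^2 := by linarith
  have h2 : lam * (2*J) ≤ lam * (r^2 - ρ^2 - d^2) :=
    mul_le_mul_of_nonneg_left hJ' hlam0
  have e1 : lam * (r^2 - d^2) = lam*s^2 + 2*s*(lam*d) := by rw [hs]; ring
  have hlamρ : 0 ≤ lam * ρ^2 := by positivity
  have h3 : 2*(lam*J) ≤ s^2 + 2*(k*ρ)*s := by
    have h4 : lam*s^2 ≤ s^2 := by nlinarith [sq_nonneg s]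
    nlinarith [h2, e1, hlamd]
  have key : L^2 ≤ (Real.pi/2 * (s + k*ρ))^2 := by
    rw [hL]
    have hkk : (lam*d)^2 = k^2 * ρ^2 := by rw [hlamd]; ring
    have hk4 : (1:ℝ) ≤ k^4 := by
      calc (1:ℝ) = 1^4 := by norm_num
        _ ≤ k^4 := pow_le_pow_left₀ zero_le_one hk1 4
    have cert1 : (0:ℝ) ≤ k^2 * s^2 := by positivity
    have cert2 : (0:ℝ) ≤ k^2 * ((k*ρ)*s) := by positivity
    have cert3 : (0:ℝ) ≤ (k^4 - 1) * ρ^2 := mul_nonneg (by linarith) (sq_nonneg ρ)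
    have expand : (Real.pi/2*(s+k*ρ))^2 = (k^2+1)*(s + k*ρ)^2 := by
      have e2 : k^2+1 = Real.pi^2/4 := by linarith
      rw [e2]; ring
    rw [hkk, expand]
    nlinarith [h3, cert1, cert2, cert3]
  have heq : Real.pi/2 * (r - (d - k*ρ)) = Real.pi/2 * (s + k*ρ) := by rw [hs]; ring
  rw [heq]
  exact le_of_sq_le_sq' hL0 (by positivity) key

private lemma exists_pivot {F : Type*} [NormedAddCommGroup F] [InnerProductSpace ℝ F]
    (x₀ z₁ z₂ : F) {r : ℝ} (h₁ : dist z₁ x₀ < r) (h₂ : dist z₂ x₀ < r) :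
    ∃ p : F, dist p x₀ < r ∧
      dist z₁ p + dist p z₂ ≤ Real.pi / 2 * dist z₁ z₂ ∧
      dist z₁ p ≤ Real.pi / 2 * (r - dist p x₀) ∧
      dist p z₂ ≤ Real.pi / 2 * (r - dist p x₀) := by
  have hπ := Real.pi_gt_three
  set k : ℝ := Real.sqrt (Real.pi^2/4 - 1) with hk
  have hk2 : k^2 = Real.pi^2/4 - 1 := Real.sq_sqrt (by nlinarith)
  have hk0 : 0 ≤ k := Real.sqrt_nonneg _
  have hk1 : 1 ≤ k := le_of_sq_le_sq' zero_le_one hk0 (by nlinarith)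
  set m : F := (2⁻¹ : ℝ) • (z₁ + z₂) with hm
  set u : F := (2⁻¹ : ℝ) • (z₂ - z₁) with hu
  set w : F := x₀ - m with hw
  clear_value k m u w
  have hρ0 : 0 ≤ ‖u‖ := norm_nonneg _
  have hd0 : 0 ≤ ‖w‖ := norm_nonneg _
  have hA0 : 0 ≤ dist z₁ x₀ := dist_nonneg
  have hB0 : 0 ≤ dist z₂ x₀ := dist_nonneg
  have hr0 : 0 < r := lt_of_le_of_lt hA0 h₁
  have hz12 : dist z₁ z₂ = 2 * ‖u‖ := by
    rw [dist_eq_norm]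
    have e : z₁ - z₂ = (-2 : ℝ) • u := by rw [hu]; module
    rw [e, norm_smul]
    simp
  have hA2 : (dist z₁ x₀)^2 = ‖u‖^2 + 2*⟪u, w⟫ + ‖w‖^2 := by
    rw [dist_eq_norm]
    have e : z₁ - x₀ = -(u + w) := by rw [hu, hw, hm]; module
    rw [e, norm_neg, norm_add_sq_real]
  have hB2 : (dist z₂ x₀)^2 = ‖u‖^2 - 2*⟪u, w⟫ + ‖w‖^2 := by
    rw [dist_eq_norm]
    have e : z₂ - x₀ = u - w := by rw [hu, hw, hm]; module
    rw [e, norm_sub_sq_real]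
  have hAr2 : (dist z₁ x₀)^2 < r^2 := by nlinarith
  have hBr2 : (dist z₂ x₀)^2 < r^2 := by nlinarith
  have hdr : ‖w‖ < r := by nlinarith [hA2, hB2, sq_nonneg ‖u‖]
  rcases le_or_gt ‖w‖ (k * ‖u‖) with hcase | hcase
  · -- p = x₀
    refine ⟨x₀, by simpa using hr0, ?_, ?_, ?_⟩
    · have hd2 : ‖w‖^2 ≤ (k*‖u‖)^2 := by nlinarith
      have e3 : (dist z₁ x₀)^2 + (dist z₂ x₀)^2 = 2*‖u‖^2 + 2*‖w‖^2 := by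
        rw [hA2, hB2]; ring
      have e4 : (dist z₁ x₀ + dist z₂ x₀)^2 ≤ 2*((dist z₁ x₀)^2 + (dist z₂ x₀)^2) := by
        nlinarith [sq_nonneg (dist z₁ x₀ - dist z₂ x₀)]
      have e5 : Real.pi^2 = 4*k^2+4 := by linarith
      have hsum2 : (dist z₁ x₀ + dist x₀ z₂)^2 ≤ (Real.pi * ‖u‖)^2 := by
        rw [dist_comm x₀ z₂]
        have : (Real.pi * ‖u‖)^2 = (4*k^2+4)*‖u‖^2 := by rw [← e5]; ring
        rw [this]
        nlinarith [e3, e4, hd2]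
      have := le_of_sq_le_sq' (by positivity) (by positivity) hsum2
      rw [hz12]; linarith
    · rw [dist_self]
      nlinarith [mul_le_mul_of_nonneg_right hπ.le hr0.le]
    · rw [dist_self, dist_comm]
      nlinarith [mul_le_mul_of_nonneg_right hπ.le hr0.le]
  · -- p = m + lam • w
    have hd0' : 0 < ‖w‖ := lt_of_le_of_lt (by positivity) hcase
    set lam : ℝ := k * ‖u‖ / ‖w‖ with hlam
    have hlamd : lam * ‖w‖ = k * ‖u‖ := by rw [hlam]; exact div_mul_cancel₀ _ hd0'.ne'
    have hlam0 : 0 ≤ lam := by positivity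
    have hlam1 : lam ≤ 1 := by rw [hlam, div_le_one hd0']; exact hcase.le
    have hpx : dist (m + lam • w) x₀ = ‖w‖ - k * ‖u‖ := by
      rw [dist_eq_norm]
      have e : m + lam • w - x₀ = -((1 - lam) • w) := by rw [hw]; module
      rw [e, norm_neg, norm_smul, Real.norm_eq_abs, abs_of_nonneg (by linarith)]
      nlinarith [hlamd]
    have hL1 : (dist z₁ (m + lam • w))^2 = ‖u‖^2 + 2*(lam*⟪u, w⟫) + (lam*‖w‖)^2 := by
      rw [dist_eq_norm]
      have e : z₁ - (m + lam • w) = -(u + lam • w) := by rw [hu, hm]; module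
      rw [e, norm_neg, norm_add_sq_real, real_inner_smul_right, norm_smul,
        Real.norm_eq_abs, abs_of_nonneg hlam0]
    have hL2 : (dist (m + lam • w) z₂)^2 = ‖u‖^2 + 2*(lam*(-⟪u, w⟫)) + (lam*‖w‖)^2 := by
      rw [dist_eq_norm]
      have e : m + lam • w - z₂ = -(u - lam • w) := by rw [hu, hm]; module
      rw [e, norm_neg, norm_sub_sq_real, real_inner_smul_right, norm_smul,
        Real.norm_eq_abs, abs_of_nonneg hlam0]
      ring
    refine ⟨m + lam • w, ?_, ?_, ?_, ?_⟩
    · rw [hpx]; nlinarith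
    · have hs2 : (dist z₁ (m + lam • w) + dist (m + lam • w) z₂)^2 ≤ (Real.pi * ‖u‖)^2 := by
        nlinarith [sq_nonneg (dist z₁ (m + lam • w) - dist (m + lam • w) z₂), hL1, hL2,
          hk2, hlamd]
      have := le_of_sq_le_sq' (by positivity) (by positivity) hs2
      rw [hz12]; linarith
    · rw [hpx]
      exact caseB_sq hk2 hk1 hρ0 hlam0 hlam1 hlamd hdr (by nlinarith [hA2])
        dist_nonneg hL1
    · rw [hpx]
      exact caseB_sq hk2 hk1 hρ0 hlam0 hlam1 hlamd hdr (by nlinarith [hB2])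
        dist_nonneg hL2




private lemma build_path {n : ℕ} (x₀ : EuclideanSpace ℝ (Fin n)) (r : ℝ) (hr : 0 < r)
    (z₁ z₂ p : EuclideanSpace ℝ (Fin n)) (hz₁ : dist z₁ x₀ < r) (hz₂ : dist z₂ x₀ < r)
    (hp : dist p x₀ < r)
    (hsum : dist z₁ p + dist p z₂ ≤ Real.pi / 2 * dist z₁ z₂)
    (hc1 : dist z₁ p ≤ Real.pi / 2 * (r - dist p x₀))
    (hc2 : dist p z₂ ≤ Real.pi / 2 * (r - dist p x₀))
    (hne : ((ball x₀ r)ᶜ : Set (EuclideanSpace ℝ (Fin n))).Nonempty)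
    (hball : ∀ x : EuclideanSpace ℝ (Fin n),
      r - dist x x₀ ≤ infDist x (ball x₀ r)ᶜ)
    (evlip : ∀ (f : ℝ → EuclideanSpace ℝ (Fin n)) (C a b : ℝ), 0 ≤ C → a ≤ b →
      (∀ x ∈ Icc a b, ∀ y ∈ Icc a b, dist (f x) (f y) ≤ C * dist x y) →
      eVariationOn f (Icc a b) ≤ ENNReal.ofReal (C * (b - a))) :
    ∃ γ : ℝ → EuclideanSpace ℝ (Fin n),
      ContinuousOn γ (Icc 0 1) ∧ γ 0 = z₁ ∧ γ 1 = z₂ ∧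
      (∀ t ∈ Icc (0:ℝ) 1, γ t ∈ ball x₀ r) ∧
      eVariationOn γ (Icc 0 1) ≤ ENNReal.ofReal (Real.pi / 2 * dist z₁ z₂) ∧
      ∀ t ∈ Icc (0:ℝ) 1,
        min (eVariationOn γ (Icc 0 t)) (eVariationOn γ (Icc t 1)) ≤
          ENNReal.ofReal (Real.pi / 2 * infDist (γ t) (ball x₀ r)ᶜ) := by
  have hπ := Real.pi_gt_three
  set L₁ : ℝ := dist z₁ p with hL₁
  set L₂ : ℝ := dist p z₂ with hL₂
  have hL₁0 : 0 ≤ L₁ := dist_nonneg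
  have hL₂0 : 0 ≤ L₂ := dist_nonneg
  set γ : ℝ → EuclideanSpace ℝ (Fin n) :=
    fun t => if t ≤ 1/2 then z₁ + (2*t) • (p - z₁) else p + (2*t - 1) • (z₂ - p) with hγ
  -- formulas
  have hfor1 : ∀ x : ℝ, x ≤ 1/2 → γ x = z₁ + (2*x) • (p - z₁) := by
    intro x hx; simp only [hγ]; rw [if_pos hx]
  have hfor2 : ∀ x : ℝ, 1/2 ≤ x → γ x = p + (2*x - 1) • (z₂ - p) := by
    intro x hx
    rcases lt_or_eq_of_le hx with h | h
    · simp only [hγ]; rw [if_neg (not_le.2 h)]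
    · simp only [hγ, ← h]
      norm_num
  have hγ0 : γ 0 = z₁ := by rw [hfor1 0 (by norm_num)]; norm_num
  have hγ1 : γ 1 = z₂ := by rw [hfor2 1 (by norm_num)]; norm_num
  have hγhalf : γ (1/2) = p := by rw [hfor1 (1/2) le_rfl]; norm_num
  -- continuity
  have hcont : Continuous γ := by
    rw [hγ]
    apply Continuous.if_le
    · fun_prop
    · fun_prop
    · exact continuous_id
    · exact continuous_const
    · intro x hx
      rw [hx]; norm_num
  -- membership
  have hmem : ∀ t ∈ Icc (0:ℝ) 1, γ t ∈ ball x₀ r := by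
    intro t ht
    obtain ⟨ht0, ht1⟩ := ht
    by_cases h : t ≤ 1/2
    · have e : γ t = (1 - 2*t) • z₁ + (2*t) • p := by
        rw [hfor1 t h]; module
      rw [e]
      exact convex_ball x₀ r (mem_ball.2 hz₁) (mem_ball.2 hp)
        (by linarith) (by linarith) (by ring)
    · push_neg at h
      have e : γ t = (2 - 2*t) • p + (2*t - 1) • z₂ := by
        rw [hfor2 t h.le]; module
      rw [e]
      exact convex_ball x₀ r (mem_ball.2 hp) (mem_ball.2 hz₂)
        (by linarith) (by linarith) (by ring)
  -- Lipschitz on pieces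
  have hlip1 : ∀ x ∈ Icc (0:ℝ) (1/2), ∀ y ∈ Icc (0:ℝ) (1/2),
      dist (γ x) (γ y) ≤ (2*L₁) * dist x y := by
    intro x hx y hy
    rw [hfor1 x hx.2, hfor1 y hy.2, dist_eq_norm]
    have e : (z₁ + (2*x) • (p - z₁)) - (z₁ + (2*y) • (p - z₁))
        = (2*x - 2*y) • (p - z₁) := by module
    rw [e, norm_smul, Real.norm_eq_abs, Real.dist_eq]
    have e2 : ‖p - z₁‖ = L₁ := by rw [← dist_eq_norm, dist_comm]
    have e3 : |2*x - 2*y| = 2 * |x - y| := by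
      rw [show 2*x - 2*y = 2*(x-y) by ring, abs_mul, abs_two]
    rw [e2, e3]; ring_nf; exact le_rfl
  have hlip2 : ∀ x ∈ Icc (1/2:ℝ) 1, ∀ y ∈ Icc (1/2:ℝ) 1,
      dist (γ x) (γ y) ≤ (2*L₂) * dist x y := by
    intro x hx y hy
    rw [hfor2 x hx.1, hfor2 y hy.1, dist_eq_norm]
    have e : (p + (2*x - 1) • (z₂ - p)) - (p + (2*y - 1) • (z₂ - p))
        = (2*x - 2*y) • (z₂ - p) := by module
    rw [e, norm_smul, Real.norm_eq_abs, Real.dist_eq]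
    have e2 : ‖z₂ - p‖ = L₂ := by rw [← dist_eq_norm, dist_comm]
    have e3 : |2*x - 2*y| = 2 * |x - y| := by
      rw [show 2*x - 2*y = 2*(x-y) by ring, abs_mul, abs_two]
    rw [e2, e3]; ring_nf; exact le_rfl
  -- variation bounds
  have hvar1 : ∀ t ∈ Icc (0:ℝ) (1/2),
      eVariationOn γ (Icc 0 t) ≤ ENNReal.ofReal (2*L₁*t) := by
    intro t ht
    have h := evlip γ (2*L₁) 0 t (by linarith) ht.1
      (fun x hx y hy => hlip1 x ⟨hx.1, hx.2.trans ht.2⟩ y ⟨hy.1, hy.2.trans ht.2⟩)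
    simpa using h
  have hvar2 : ∀ t ∈ Icc (1/2:ℝ) 1,
      eVariationOn γ (Icc t 1) ≤ ENNReal.ofReal (2*L₂*(1-t)) := by
    intro t ht
    have h := evlip γ (2*L₂) t 1 (by linarith) ht.2
      (fun x hx y hy => hlip2 x ⟨ht.1.trans hx.1, hx.2⟩ y ⟨ht.1.trans hy.1, hy.2⟩)
    simpa [mul_comm] using h
  -- total variation
  have htot : eVariationOn γ (Icc 0 1) ≤ ENNReal.ofReal (Real.pi / 2 * dist z₁ z₂) := by
    have hsplit := eVariationOn.Icc_add_Icc γ (s := (univ : Set ℝ))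
      (a := 0) (b := 1/2) (c := 1) (by norm_num) (by norm_num) (mem_univ _)
    simp only [univ_inter] at hsplit
    rw [← hsplit]
    have v1 := hvar1 (1/2) ⟨by norm_num, le_rfl⟩
    have v2 := hvar2 (1/2) ⟨le_rfl, by norm_num⟩
    calc eVariationOn γ (Icc 0 (1/2)) + eVariationOn γ (Icc (1/2) 1)
        ≤ ENNReal.ofReal (2*L₁*(1/2)) + ENNReal.ofReal (2*L₂*(1-1/2)) := add_le_add v1 v2
      _ = ENNReal.ofReal (L₁ + L₂) := by
          rw [← ENNReal.ofReal_add (by linarith) (by linarith)]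
          congr 1; ring
      _ ≤ ENNReal.ofReal (Real.pi / 2 * dist z₁ z₂) := ENNReal.ofReal_le_ofReal hsum
  refine ⟨γ, hcont.continuousOn, hγ0, hγ1, hmem, htot, ?_⟩
  -- cone condition
  intro t ht
  obtain ⟨ht0, ht1⟩ := ht
  have hid := hball (γ t)
  by_cases h : t ≤ 1/2
  · refine le_trans (min_le_left _ _) (le_trans (hvar1 t ⟨ht0, h⟩)
      (ENNReal.ofReal_le_ofReal ?_))
    have hg : dist (γ t) x₀ ≤ (1-2*t)*(dist z₁ x₀) + (2*t)*(dist p x₀) := by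
      have e : γ t - x₀ = (1-2*t) • (z₁ - x₀) + (2*t) • (p - x₀) := by
        rw [hfor1 t h]; module
      rw [dist_eq_norm, e]
      calc ‖(1-2*t) • (z₁ - x₀) + (2*t) • (p - x₀)‖
          ≤ ‖(1-2*t) • (z₁ - x₀)‖ + ‖(2*t) • (p - x₀)‖ := norm_add_le _ _
        _ = (1-2*t)*(dist z₁ x₀) + (2*t)*(dist p x₀) := by
            rw [norm_smul, norm_smul, Real.norm_eq_abs, Real.norm_eq_abs,
              abs_of_nonneg (by linarith), abs_of_nonneg (by linarith : (0:ℝ) ≤ 2*t),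
              dist_eq_norm, dist_eq_norm]
    have h2t : (0:ℝ) ≤ 2*t := by linarith
    have hrA : (0:ℝ) ≤ r - dist z₁ x₀ := by linarith
    have step1 : 2*t*L₁ ≤ 2*t*(Real.pi/2*(r - dist p x₀)) :=
      mul_le_mul_of_nonneg_left hc1 h2t
    have step2 : 2*t*(r - dist p x₀) ≤ r - dist (γ t) x₀ := by
      nlinarith [mul_nonneg (by linarith : (0:ℝ) ≤ 1 - 2*t) hrA]
    have step3 : Real.pi/2*(2*t*(r - dist p x₀)) ≤ Real.pi/2*(r - dist (γ t) x₀) :=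
      mul_le_mul_of_nonneg_left step2 (by positivity)
    have step4 : Real.pi/2*(r - dist (γ t) x₀) ≤ Real.pi/2 * infDist (γ t) (ball x₀ r)ᶜ :=
      mul_le_mul_of_nonneg_left hid (by positivity)
    nlinarith [step1, step3, step4]
  · push_neg at h
    refine le_trans (min_le_right _ _) (le_trans (hvar2 t ⟨h.le, ht1⟩)
      (ENNReal.ofReal_le_ofReal ?_))
    have hg : dist (γ t) x₀ ≤ (2-2*t)*(dist p x₀) + (2*t-1)*(dist z₂ x₀) := by
      have e : γ t - x₀ = (2-2*t) • (p - x₀) + (2*t-1) • (z₂ - x₀) := by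
        rw [hfor2 t h.le]; module
      rw [dist_eq_norm, e]
      calc ‖(2-2*t) • (p - x₀) + (2*t-1) • (z₂ - x₀)‖
          ≤ ‖(2-2*t) • (p - x₀)‖ + ‖(2*t-1) • (z₂ - x₀)‖ := norm_add_le _ _
        _ = (2-2*t)*(dist p x₀) + (2*t-1)*(dist z₂ x₀) := by
            rw [norm_smul, norm_smul, Real.norm_eq_abs, Real.norm_eq_abs,
              abs_of_nonneg (by linarith : (0:ℝ) ≤ 2-2*t),
              abs_of_nonneg (by linarith : (0:ℝ) ≤ 2*t-1),
              dist_eq_norm, dist_eq_norm]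
    have h2t : (0:ℝ) ≤ 2-2*t := by linarith
    have hrB : (0:ℝ) ≤ r - dist z₂ x₀ := by linarith
    have step1 : (2-2*t)*L₂ ≤ (2-2*t)*(Real.pi/2*(r - dist p x₀)) :=
      mul_le_mul_of_nonneg_left hc2 h2t
    have step2 : (2-2*t)*(r - dist p x₀) ≤ r - dist (γ t) x₀ := by
      nlinarith [mul_nonneg (by linarith : (0:ℝ) ≤ 2*t-1) hrB]
    have step3 : Real.pi/2*((2-2*t)*(r - dist p x₀)) ≤ Real.pi/2*(r - dist (γ t) x₀) :=
      mul_le_mul_of_nonneg_left step2 (by positivity)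
    have step4 : Real.pi/2*(r - dist (γ t) x₀) ≤ Real.pi/2 * infDist (γ t) (ball x₀ r)ᶜ :=
      mul_le_mul_of_nonneg_left hid (by positivity)
    nlinarith [step1, step3, step4]

/-- Every open ball in `ℝⁿ` is a `π/2`-uniform domain. -/
theorem stmt19 {n : ℕ} (x₀ : EuclideanSpace ℝ (Fin n)) (r : ℝ) (hr : 0 < r) :
    ∀ z₁ ∈ ball x₀ r, ∀ z₂ ∈ ball x₀ r, ∃ γ : ℝ → EuclideanSpace ℝ (Fin n),
      ContinuousOn γ (Icc 0 1) ∧ γ 0 = z₁ ∧ γ 1 = z₂ ∧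
      (∀ t ∈ Icc (0:ℝ) 1, γ t ∈ ball x₀ r) ∧
      eVariationOn γ (Icc 0 1) ≤ ENNReal.ofReal (Real.pi / 2 * dist z₁ z₂) ∧
      ∀ t ∈ Icc (0:ℝ) 1,
        min (eVariationOn γ (Icc 0 t)) (eVariationOn γ (Icc t 1)) ≤
          ENNReal.ofReal (Real.pi / 2 * infDist (γ t) (ball x₀ r)ᶜ) := by
  intro z₁ hz₁ z₂ hz₂
  by_cases hzz : z₁ = z₂
  · -- constant path
    have hconst : ∀ s : Set ℝ, eVariationOn (fun _ : ℝ => z₁) s = 0 := by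
      intro s
      apply eVariationOn.constant_on
      exact Set.Subsingleton.anti subsingleton_singleton
        (Set.image_subset_iff.2 fun y _ => rfl)
    refine ⟨fun _ => z₁, continuousOn_const, rfl, hzz.symm ▸ rfl, fun t _ => hz₁, ?_, ?_⟩
    · rw [hconst]; exact zero_le
    · intro t _
      exact le_trans (min_le_left _ _) ((hconst (Icc 0 t)) ▸ zero_le)
  · rw [mem_ball] at hz₁ hz₂
    obtain ⟨p, hp, hsum, hc1, hc2⟩ := exists_pivot x₀ z₁ z₂ hz₁ hz₂
    have hne : ((ball x₀ r)ᶜ : Set (EuclideanSpace ℝ (Fin n))).Nonempty := by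
      have hv : z₂ - z₁ ≠ 0 := sub_ne_zero.2 (Ne.symm hzz)
      have hv0 : (0:ℝ) < ‖z₂ - z₁‖ := norm_pos_iff.2 hv
      have hr0 : 0 < r := hr
      refine ⟨x₀ + (r / ‖z₂ - z₁‖) • (z₂ - z₁), ?_⟩
      simp only [mem_compl_iff, mem_ball, not_lt]
      rw [dist_eq_norm]
      have e : x₀ + (r / ‖z₂ - z₁‖) • (z₂ - z₁) - x₀ = (r / ‖z₂ - z₁‖) • (z₂ - z₁) := by
        abel
      rw [e, norm_smul, Real.norm_eq_abs, abs_of_nonneg (by positivity)]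
      rw [div_mul_cancel₀ _ (ne_of_gt hv0)]
    exact build_path x₀ r hr z₁ z₂ p hz₁ hz₂ hp hsum hc1 hc2 hne
      (fun x => infDist_compl_ball_ge hne)
      (fun f C a b hC hab h => evar_lip' hC hab h)
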